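/- Under the above hypotheses, ∑_π μ(R̃_π) ≥ δ/2. Moreover there exists a single Merlin message m̂_mer such that ∑_{π with Merlin message m̂_mer} μ(R̃_π) ≥ (δ/2)·2^{−c_M}. -/

import Mathlib

open Classical Finset in
/-- Markov-type column extraction.  Given a product distribution `μx × μy`, a set
`S` of good input pairs of mass at least `δ`, and a family of rectangles
`R_π = X_π × Y_π` with Merlin messages `mer π` (at most `2^{c_M}` distinct ones),
such that `∑_π μ(R_π) ≤ 2^{c_M}` and
`∑_π μ(R_π ∩ S ∩ M_mer^{-1}(mer π)) ≥ δ`, letting `Ỹ_π` be the columns of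
`R_π` on which the good pairs with matching Merlin message carry at least a
`(δ/2)·2^{−c_M}`-fraction of the mass, and `R̃_π = X_π × Ỹ_π`:
`∑_π μ(R̃_π) ≥ δ/2`, and there is a single Merlin message `m̂` with
`∑_{π : mer π = m̂} μ(R̃_π) ≥ (δ/2)·2^{−c_M}`. -/
theorem stmt17 {X Y ι : Type} [Fintype X] [Fintype Y]
    (μx : X → ℝ) (μy : Y → ℝ) (hx0 : ∀ x, 0 ≤ μx x) (hy0 : ∀ y, 0 ≤ μy y)
    (P : Finset ι) (Xp : ι → Finset X) (Yp : ι → Finset Y)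
    (mer : ι → List Bool) (Mmer : X → Y → List Bool)
    (S : Finset (X × Y)) (cM : ℕ) (δ : ℝ) (hδ : 0 ≤ δ)
    (Hdisj : ∑ π ∈ P, (∑ x ∈ Xp π, ∑ y ∈ Yp π, μx x * μy y) ≤ (2 : ℝ) ^ cM)
    (Hgood : δ ≤ ∑ π ∈ P, ∑ x ∈ Xp π, ∑ y ∈ Yp π,
      (if (x, y) ∈ S ∧ Mmer x y = mer π then μx x * μy y else 0))
    (Hmer : ((P.image mer).card : ℝ) ≤ (2 : ℝ) ^ cM) :
    (δ / 2 ≤ ∑ π ∈ P, ∑ x ∈ Xp π, ∑ y ∈ (Yp π).filter (fun y =>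
        δ / 2 * (2 : ℝ) ^ (-(cM : ℝ)) * ((∑ x' ∈ Xp π, μx x') * μy y) ≤
          (∑ x' ∈ (Xp π).filter (fun x' => (x', y) ∈ S ∧ Mmer x' y = mer π), μx x')
            * μy y), μx x * μy y)
    ∧ ∃ mh : List Bool,
        δ / 2 * (2 : ℝ) ^ (-(cM : ℝ)) ≤
          ∑ π ∈ P.filter (fun π => mer π = mh), ∑ x ∈ Xp π,
            ∑ y ∈ (Yp π).filter (fun y =>
              δ / 2 * (2 : ℝ) ^ (-(cM : ℝ)) * ((∑ x' ∈ Xp π, μx x') * μy y) ≤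
                (∑ x' ∈ (Xp π).filter (fun x' => (x', y) ∈ S ∧ Mmer x' y = mer π),
                  μx x') * μy y), μx x * μy y := by
  have h2pos : (0:ℝ) < (2:ℝ) ^ cM := by positivity
  have hcpow : (2:ℝ) ^ (-(cM:ℝ)) = ((2:ℝ) ^ cM)⁻¹ := by
    rw [Real.rpow_neg (by norm_num), Real.rpow_natCast]
  set c : ℝ := δ / 2 * (2 : ℝ) ^ (-(cM : ℝ)) with hc
  have hc0 : 0 ≤ c := by rw [hc, hcpow]; positivity
  have hcmul : c * (2:ℝ) ^ cM = δ / 2 := by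
    rw [hc, hcpow]; field_simp
  -- abbreviations
  set g : ι → Y → ℝ := fun π y =>
    (∑ x' ∈ (Xp π).filter (fun x' => (x', y) ∈ S ∧ Mmer x' y = mer π), μx x') * μy y
    with hg
  set col : ι → Y → ℝ := fun π y => (∑ x' ∈ Xp π, μx x') * μy y with hcol
  set T : ι → Finset Y := fun π => (Yp π).filter (fun y => c * col π y ≤ g π y) with hT
  have hg0 : ∀ π y, 0 ≤ g π y := fun π y => by
    apply mul_nonneg (Finset.sum_nonneg fun _ _ => hx0 _) (hy0 _)
  have hcol0 : ∀ π y, 0 ≤ col π y := fun π y => by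
    apply mul_nonneg (Finset.sum_nonneg fun _ _ => hx0 _) (hy0 _)
  have hgle : ∀ π y, g π y ≤ col π y := fun π y => by
    apply mul_le_mul_of_nonneg_right _ (hy0 y)
    exact Finset.sum_le_sum_of_subset_of_nonneg (Finset.filter_subset _ _)
      (fun x _ _ => hx0 x)
  -- rewrite the "good" hypothesis column-wise
  have eq1 : ∀ π, (∑ x ∈ Xp π, ∑ y ∈ Yp π,
      (if (x, y) ∈ S ∧ Mmer x y = mer π then μx x * μy y else 0))
      = ∑ y ∈ Yp π, g π y := by
    intro π
    rw [Finset.sum_comm]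
    refine Finset.sum_congr rfl fun y _ => ?_
    rw [hg]
    simp only []
    rw [Finset.sum_mul, Finset.sum_filter]
  -- rewrite rectangle mass column-wise
  have eq2 : ∀ π (A : Finset Y), (∑ x ∈ Xp π, ∑ y ∈ A, μx x * μy y)
      = ∑ y ∈ A, col π y := by
    intro π A
    rw [Finset.sum_comm]
    refine Finset.sum_congr rfl fun y _ => ?_
    rw [hcol]
    simp only []
    rw [Finset.sum_mul]
  -- the goal sums are exactly sums of col over T
  have goalEq : ∀ π, (∑ x ∈ Xp π, ∑ y ∈ (Yp π).filter (fun y =>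
      c * ((∑ x' ∈ Xp π, μx x') * μy y) ≤
        (∑ x' ∈ (Xp π).filter (fun x' => (x', y) ∈ S ∧ Mmer x' y = mer π), μx x')
          * μy y), μx x * μy y) = ∑ y ∈ T π, col π y := by
    intro π
    rw [eq2 π]
  -- main estimate: good mass on bad columns is at most δ/2
  have key : δ / 2 ≤ ∑ π ∈ P, ∑ y ∈ T π, col π y := by
    have hsplit : ∀ π ∈ P, ∑ y ∈ Yp π, g π y
        ≤ (∑ y ∈ T π, col π y) + ∑ y ∈ Yp π, c * col π y := by
      intro π _
      rw [← Finset.sum_filter_add_sum_filter_not (Yp π) (fun y => c * col π y ≤ g π y)]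
      refine add_le_add (Finset.sum_le_sum fun y _ => hgle π y) ?_
      calc ∑ y ∈ (Yp π).filter (fun y => ¬ c * col π y ≤ g π y), g π y
          ≤ ∑ y ∈ (Yp π).filter (fun y => ¬ c * col π y ≤ g π y), c * col π y := by
            refine Finset.sum_le_sum fun y hy => ?_
            exact le_of_lt (lt_of_not_ge (Finset.mem_filter.mp hy).2)
        _ ≤ ∑ y ∈ Yp π, c * col π y :=
            Finset.sum_le_sum_of_subset_of_nonneg (Finset.filter_subset _ _)
              (fun y _ _ => mul_nonneg hc0 (hcol0 π y))
    have h1 : δ ≤ (∑ π ∈ P, ∑ y ∈ T π, col π y) + ∑ π ∈ P, ∑ y ∈ Yp π, c * col π y := by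
      calc δ ≤ ∑ π ∈ P, ∑ y ∈ Yp π, g π y := by
              rw [← Finset.sum_congr rfl fun π _ => eq1 π]; exact Hgood
        _ ≤ ∑ π ∈ P, ((∑ y ∈ T π, col π y) + ∑ y ∈ Yp π, c * col π y) :=
              Finset.sum_le_sum hsplit
        _ = _ := Finset.sum_add_distrib
    have h2 : ∑ π ∈ P, ∑ y ∈ Yp π, c * col π y ≤ δ / 2 := by
      have : ∑ π ∈ P, ∑ y ∈ Yp π, c * col π y
          = c * ∑ π ∈ P, ∑ y ∈ Yp π, col π y := by
        rw [Finset.mul_sum]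
        exact Finset.sum_congr rfl fun π _ => by rw [Finset.mul_sum]
      rw [this, ← hcmul]
      have : ∑ π ∈ P, ∑ y ∈ Yp π, col π y ≤ (2:ℝ) ^ cM := by
        rw [← Finset.sum_congr rfl fun π _ => eq2 π (Yp π)]; exact Hdisj
      exact mul_le_mul_of_nonneg_left this hc0
    linarith
  constructor
  · calc δ / 2 ≤ ∑ π ∈ P, ∑ y ∈ T π, col π y := key
      _ = _ := (Finset.sum_congr rfl fun π _ => (goalEq π).symm)
  · -- pigeonhole over Merlin messages
    by_contra hcon
    push_neg at hcon
    set F : ι → ℝ := fun π => ∑ y ∈ T π, col π y with hF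
    have hF0 : ∀ π, 0 ≤ F π := fun π =>
      Finset.sum_nonneg fun y _ => hcol0 π y
    have hfib : ∑ m ∈ P.image mer, ∑ π ∈ P.filter (fun π => mer π = m), F π
        = ∑ π ∈ P, F π := by
      rw [Finset.sum_fiberwise_eq_sum_filter,
        Finset.filter_true_of_mem (fun π hπ => Finset.mem_image_of_mem mer hπ)]
    have himgne : (P.image mer).Nonempty := by
      by_contra hne
      rw [Finset.not_nonempty_iff_eq_empty] at hne
      have hPe : P = ∅ := Finset.image_eq_empty.mp hne
      have := key
      rw [hPe] at this
      simp at this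
      have hδ0 : δ = 0 := le_antisymm (by linarith) hδ
      have hcz : c = 0 := by rw [hc, hδ0]; ring
      have := hcon []
      rw [hPe] at this
      simp [hcz] at this
    have hlt : ∀ m ∈ P.image mer,
        ∑ π ∈ P.filter (fun π => mer π = m), F π < c := by
      intro m _
      have := hcon m
      calc ∑ π ∈ P.filter (fun π => mer π = m), F π
          = ∑ π ∈ P.filter (fun π => mer π = m), ∑ x ∈ Xp π,
            ∑ y ∈ (Yp π).filter (fun y =>
              c * ((∑ x' ∈ Xp π, μx x') * μy y) ≤
                (∑ x' ∈ (Xp π).filter (fun x' => (x', y) ∈ S ∧ Mmer x' y = mer π),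
                  μx x') * μy y), μx x * μy y :=
            Finset.sum_congr rfl fun π _ => (goalEq π).symm
        _ < c := this
    have htot : ∑ π ∈ P, F π < ((P.image mer).card : ℝ) * c := by
      rw [← hfib]
      calc ∑ m ∈ P.image mer, ∑ π ∈ P.filter (fun π => mer π = m), F π
          < ∑ m ∈ P.image mer, c := Finset.sum_lt_sum_of_nonempty himgne hlt
        _ = ((P.image mer).card : ℝ) * c := by
            rw [Finset.sum_const, nsmul_eq_mul]
    have hcard : ((P.image mer).card : ℝ) * c ≤ (2:ℝ) ^ cM * c :=
      mul_le_mul_of_nonneg_right Hmer hc0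
    have hkey2 : δ / 2 ≤ ∑ π ∈ P, F π := key
    have : (2:ℝ) ^ cM * c = δ / 2 := by rw [mul_comm]; exact hcmul
    linarith
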